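/- If A is a unital noncommutatively G-graded R-algebra, then the multiplicative identity 1 of A lies in the identity component A_e. -/

import Mathlib

/-- If `A` is a unital noncommutatively `G`-graded `R`-algebra, then `1 ∈ A_e`. -/
theorem one_mem_identity_component
    {R A G : Type*} [CommRing R] [Ring A] [Algebra R A] [Group G] [DecidableEq G]
    (𝒜 : G → Submodule R A)
    (hdecomp : DirectSum.IsInternal 𝒜)
    (hmul : ∀ g h : G, ∀ a ∈ 𝒜 g, ∀ b ∈ 𝒜 h, a * b ∈ 𝒜 (g * h) ⊔ 𝒜 (h * g)) :
    (1 : A) ∈ 𝒜 1 := by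
  classical
  letI : DirectSum.Decomposition 𝒜 := hdecomp.chooseDecomposition
  -- components in a join vanish away from both indices
  have hjoin : ∀ (g g' h : G) (x : A), x ∈ 𝒜 g ⊔ 𝒜 g' → h ≠ g → h ≠ g' →
      (DirectSum.decompose 𝒜 x h : A) = 0 := by
    intro g g' h x hx hg hg'
    obtain ⟨y, hy, z, hz, rfl⟩ := Submodule.mem_sup.mp hx
    rw [DirectSum.decompose_add, DirectSum.add_apply, Submodule.coe_add,
      DirectSum.decompose_of_mem_ne 𝒜 hy (Ne.symm hg),
      DirectSum.decompose_of_mem_ne 𝒜 hz (Ne.symm hg'), add_zero]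
  set u : A := (DirectSum.decompose 𝒜 (1 : A) 1 : A) with hu
  have hu_mem : u ∈ 𝒜 1 := (DirectSum.decompose 𝒜 (1 : A) 1).2
  -- u * a = a for homogeneous a
  have key : ∀ (h : G) (a : A), a ∈ 𝒜 h → u * a = a := by
    intro h a ha
    have h1 : (1 : A) = ∑ g ∈ (DirectSum.decompose 𝒜 (1 : A)).support,
        (DirectSum.decompose 𝒜 (1 : A) g : A) :=
      (DirectSum.sum_support_decompose 𝒜 1).symm
    have ha' : a = ∑ g ∈ (DirectSum.decompose 𝒜 (1 : A)).support,
        (DirectSum.decompose 𝒜 (1 : A) g : A) * a := by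
      conv_lhs => rw [← one_mul a, h1, Finset.sum_mul]
    -- project onto component h
    have := congrArg (fun x => (DirectSum.decompose 𝒜 x h : A)) ha'
    simp only [DirectSum.decompose_sum, DirectSum.decompose_of_mem_same 𝒜 ha] at this
    rw [DFinsupp.finset_sum_apply, AddSubmonoidClass.coe_finset_sum] at this
    -- compute each summand
    have hterm : ∀ g ∈ (DirectSum.decompose 𝒜 (1 : A)).support,
        (DirectSum.decompose 𝒜 ((DirectSum.decompose 𝒜 (1 : A) g : A) * a) h : A)
          = if g = 1 then u * a else 0 := by
      intro g _
      by_cases hg : g = 1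
      · subst hg
        have hmem : u * a ∈ 𝒜 h := by
          have := hmul 1 h u hu_mem a ha
          simpa using this
        rw [← hu]
        simp [DirectSum.decompose_of_mem_same 𝒜 hmem]
      · have hmem := hmul g h _ (DirectSum.decompose 𝒜 (1 : A) g).2 a ha
        have h1 : h ≠ g * h := fun hh => hg (right_eq_mul.mp hh)
        have h2 : h ≠ h * g := fun hh => hg (left_eq_mul.mp hh)
        simp [hg, hjoin _ _ _ _ hmem h1 h2]
    rw [Finset.sum_congr rfl hterm, Finset.sum_ite_eq'] at this
    by_cases he : (1 : G) ∈ (DirectSum.decompose 𝒜 (1 : A)).support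
    · simp [he] at this
      exact this.symm
    · -- then u = 0, and also the sum is 0 so a = 0
      have hu0 : u = 0 := by
        have := DFinsupp.notMem_support_iff.mp he
        simp [hu, this]
      simp [he] at this
      simp [hu0, this]
  -- extend to all of A
  have htop : (⨆ g, 𝒜 g) = ⊤ := hdecomp.submodule_iSup_eq_top
  have hall : ∀ a : A, u * a = a := by
    intro a
    have hmem : a ∈ (⊤ : Submodule R A) := trivial
    rw [← htop] at hmem
    refine Submodule.iSup_induction (motive := fun a => u * a = a) 𝒜 hmem key ?_ ?_
    · simp
    · intro x y hx hy; rw [mul_add, hx, hy]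
  have : u = 1 := by rw [← mul_one u, hall 1]
  rw [← this]; exact hu_mem
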